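/- arXiv:2507.05644 — 2 statements merged into one kernel-verified Lean document; each statement's English description precedes it below -/
import Mathlib

section
/- Let n, d, d' be positive integers and λ > 0. For each i = 1,…,n let h_i ∈ ℝ^d and let ℓ_i : ℝ^{d'} → ℝ be differentiable. Define L_λ(W) = (1/n)·Σ_{i=1}^n ℓ_i(W h_i) + (λ/2)·‖W‖_F² for W ∈ ℝ^{d'×d}, and define the FACT matrix F := −(1/(nλ))·Σ_{i=1}^n (W^⊤ ∇ℓ_i(W h_i)) h_i^⊤ ∈ ℝ^{d×d}. If W is a critical point of L_λ, then W^⊤ W = F^⊤, i.e. W^⊤ W = −(1/(nλ))·Σ_{i=1}^n h_i (W^⊤ ∇ℓ_i(W h_i))^⊤. -/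
open Matrix

attribute [local instance] Matrix.frobeniusSeminormedAddCommGroup
  Matrix.frobeniusNormedAddCommGroup Matrix.frobeniusNormedSpace

/-- The gradient of a function `f : ℝ^k → ℝ`, as a plain vector `Fin k → ℝ`. -/
noncomputable def grad {k : ℕ} (f : EuclideanSpace ℝ (Fin k) → ℝ) (x : Fin k → ℝ) :
    Fin k → ℝ :=
  WithLp.equiv 2 (Fin k → ℝ) <| gradient f ((WithLp.equiv 2 (Fin k → ℝ)).symm x)

/-- The linear map `V ↦ V *ᵥ v` as a continuous linear map into Euclidean space. -/
noncomputable def matVecCLM {d d' : ℕ} (v : Fin d → ℝ) :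
    Matrix (Fin d') (Fin d) ℝ →L[ℝ] EuclideanSpace ℝ (Fin d') :=
  LinearMap.toContinuousLinearMap
    { toFun := fun V => (WithLp.equiv 2 (Fin d' → ℝ)).symm (V.mulVec v)
      map_add' := by intros; simp [Matrix.add_mulVec]
      map_smul' := by intros; simp [Matrix.smul_mulVec] }

/-- The entry-extraction continuous linear map. -/
noncomputable def entryCLM {d d' : ℕ} (a : Fin d') (b : Fin d) :
    Matrix (Fin d') (Fin d) ℝ →L[ℝ] ℝ :=
  LinearMap.toContinuousLinearMap
    { toFun := fun V => V a b
      map_add' := fun _ _ => rfl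
      map_smul' := fun _ _ => rfl }

@[simp] lemma matVecCLM_apply {d d' : ℕ} (v : Fin d → ℝ) (V : Matrix (Fin d') (Fin d) ℝ) :
    matVecCLM v V = (WithLp.equiv 2 (Fin d' → ℝ)).symm (V.mulVec v) := rfl

@[simp] lemma entryCLM_apply {d d' : ℕ} (a : Fin d') (b : Fin d) (V : Matrix (Fin d') (Fin d) ℝ) :
    entryCLM a b V = V a b := rfl

/-- Entrywise first-order condition at a critical point. -/
lemma fact_key
    (n d d' : ℕ)
    (lam : ℝ)
    (h : Fin n → Fin d → ℝ)
    (ℓ : Fin n → EuclideanSpace ℝ (Fin d') → ℝ)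
    (hdiff : ∀ i, Differentiable ℝ (ℓ i))
    (W : Matrix (Fin d') (Fin d) ℝ)
    (hcrit : fderiv ℝ
      (fun V : Matrix (Fin d') (Fin d) ℝ =>
        (1 / n : ℝ) * ∑ i, ℓ i ((WithLp.equiv 2 (Fin d' → ℝ)).symm (V.mulVec (h i)))
          + (lam / 2) * ∑ a : Fin d', ∑ b : Fin d, V a b ^ 2) W = 0) :
    ∀ a b, (1/n:ℝ) * ∑ i, grad (ℓ i) (W.mulVec (h i)) a * h i b + lam * W a b = 0 := by
  set D : Matrix (Fin d') (Fin d) ℝ →L[ℝ] ℝ :=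
    (1/n : ℝ) • (∑ i, (fderiv ℝ (ℓ i) (matVecCLM (h i) W)).comp (matVecCLM (h i)))
      + (lam/2 : ℝ) • ∑ a : Fin d', ∑ b : Fin d,
          ((2:ℕ) * W a b ^ (2-1) : ℝ) • entryCLM a b with hDdef
  have hHas : HasFDerivAt
      (fun V : Matrix (Fin d') (Fin d) ℝ =>
        (1 / n : ℝ) * ∑ i, ℓ i ((WithLp.equiv 2 (Fin d' → ℝ)).symm (V.mulVec (h i)))
          + (lam / 2) * ∑ a : Fin d', ∑ b : Fin d, V a b ^ 2) D W := by
    apply HasFDerivAt.add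
    · exact HasFDerivAt.const_mul
        (HasFDerivAt.fun_sum (fun i _ =>
          (((hdiff i) _).hasFDerivAt.comp W (matVecCLM (h i)).hasFDerivAt))) _
    · exact HasFDerivAt.const_mul
        (HasFDerivAt.fun_sum (fun a _ => HasFDerivAt.fun_sum (fun b _ =>
          (hasDerivAt_pow 2 (W a b)).comp_hasFDerivAt W (entryCLM a b).hasFDerivAt))) _
  have hD0 : D = 0 := by rw [← hHas.fderiv]; exact hcrit
  intro a b
  have := DFunLike.congr_fun hD0 (Matrix.single a b 1)
  simp only [hDdef, ContinuousLinearMap.add_apply, ContinuousLinearMap.smul_apply,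
    ContinuousLinearMap.sum_apply, ContinuousLinearMap.comp_apply, matVecCLM_apply,
    entryCLM_apply, ContinuousLinearMap.zero_apply] at this
  have hfd : ∀ (p : EuclideanSpace ℝ (Fin d')) i (c : ℝ) (j : Fin d'),
      fderiv ℝ (ℓ i) p (EuclideanSpace.single j c) = c * gradient (ℓ i) p j := by
    intro p i c j
    have h1 : fderiv ℝ (ℓ i) p = InnerProductSpace.toDual ℝ _ (gradient (ℓ i) p) :=
      ((InnerProductSpace.toDual ℝ _).apply_symm_apply _).symm
    rw [h1, InnerProductSpace.toDual_apply_apply, EuclideanSpace.inner_single_right]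
    simp
  have hmv : ∀ i, (WithLp.equiv 2 (Fin d' → ℝ)).symm ((Matrix.single a b 1).mulVec (h i))
      = EuclideanSpace.single a (h i b) := by
    intro i
    rw [Matrix.single_mulVec]
    simp only [one_mul, EuclideanSpace.single]
    congr 1
  simp only [hmv, hfd] at this
  have hq : ∑ a' : Fin d', ∑ b' : Fin d, (((2:ℕ):ℝ) * W a' b' ^ (2-1) : ℝ)
      * (Matrix.single a b 1) a' b' = 2 * W a b := by
    simp [Matrix.single, mul_ite, ite_and, Finset.sum_ite_eq]
  simp only [smul_eq_mul] at this
  rw [hq] at this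
  have hsum : ∑ i, grad (ℓ i) (W.mulVec (h i)) a * h i b
      = ∑ x, h x b * gradient (ℓ x) ((WithLp.equiv 2 (Fin d' → ℝ)).symm (W.mulVec (h x))) a := by
    refine Finset.sum_congr rfl (fun i _ => ?_)
    rw [mul_comm]
    rfl
  rw [hsum]
  linarith [this]

/-- **Transpose symmetrization of the FACT.** If `W` is a critical point of the regularized
loss, then `Wᵀ W = Fᵀ` where `F` is the FACT matrix, i.e.
`Wᵀ W = -(1/(nλ)) ∑ i h_i (Wᵀ ∇ℓ_i(W h_i))ᵀ`. -/
theorem fact_transpose_symmetrization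
    (n d d' : ℕ) (hn : 0 < n) (hd : 0 < d) (hd' : 0 < d')
    (lam : ℝ) (hlam : 0 < lam)
    (h : Fin n → Fin d → ℝ)
    (ℓ : Fin n → EuclideanSpace ℝ (Fin d') → ℝ)
    (hdiff : ∀ i, Differentiable ℝ (ℓ i))
    (W : Matrix (Fin d') (Fin d) ℝ)
    (F : Matrix (Fin d) (Fin d) ℝ)
    (hF : F = (-(1 / (n * lam))) •
      ∑ i, Matrix.vecMulVec (Wᵀ.mulVec (grad (ℓ i) (W.mulVec (h i)))) (h i))
    (hcrit : fderiv ℝ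
      (fun V : Matrix (Fin d') (Fin d) ℝ =>
        (1 / n : ℝ) * ∑ i, ℓ i ((WithLp.equiv 2 (Fin d' → ℝ)).symm (V.mulVec (h i)))
          + (lam / 2) * ∑ a : Fin d', ∑ b : Fin d, V a b ^ 2) W = 0) :
    Wᵀ * W = Fᵀ ∧
      Wᵀ * W = (-(1 / (n * lam))) •
        ∑ i, Matrix.vecMulVec (h i) (Wᵀ.mulVec (grad (ℓ i) (W.mulVec (h i)))) := by
  have key := fact_key n d d' lam h ℓ hdiff W hcrit
  set G : Fin n → Fin d' → ℝ := fun i => grad (ℓ i) (W.mulVec (h i)) with hG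
  have hn' : (n:ℝ) ≠ 0 := Nat.cast_ne_zero.mpr hn.ne'
  have hW : ∀ a b, W a b = (-(1 / (n * lam))) * ∑ i, G i a * h i b := by
    intro a b
    have := key a b
    field_simp at this ⊢
    linarith
  have hWW : Wᵀ * W = F := by
    rw [hF]
    ext x y
    simp only [Matrix.mul_apply, Matrix.transpose_apply, Matrix.smul_apply,
      Matrix.sum_apply, Matrix.vecMulVec_apply, Matrix.mulVec, dotProduct, smul_eq_mul]
    calc ∑ a, W a x * W a y
        = ∑ a, W a x * ((-(1 / (n * lam))) * ∑ i, G i a * h i y) := by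
          exact Finset.sum_congr rfl fun a _ => by rw [← hW a y]
      _ = ∑ a, ∑ i, (-(1 / (n * lam))) * (W a x * G i a * h i y) := by
          refine Finset.sum_congr rfl fun a _ => ?_
          rw [Finset.mul_sum, Finset.mul_sum]
          exact Finset.sum_congr rfl fun i _ => by ring
      _ = ∑ i, ∑ a, (-(1 / (n * lam))) * (W a x * G i a * h i y) := Finset.sum_comm
      _ = (-(1 / (n * lam))) * ∑ i, (∑ a, Wᵀ x a * G i a) * h i y := by
          rw [Finset.mul_sum]
          refine Finset.sum_congr rfl fun i _ => ?_
          rw [Finset.sum_mul, Finset.mul_sum]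
          exact Finset.sum_congr rfl fun a _ => by rw [Matrix.transpose_apply]
  have hsymm : (Wᵀ * W)ᵀ = Wᵀ * W := by
    rw [Matrix.transpose_mul, Matrix.transpose_transpose]
  have h1 : Wᵀ * W = Fᵀ := by rw [← hWW, hsymm]
  refine ⟨h1, ?_⟩
  rw [h1, hF]
  rw [Matrix.transpose_smul]
  congr 1
  rw [Matrix.transpose_sum]
  refine Finset.sum_congr rfl fun i _ => ?_
  ext x y
  simp [Matrix.vecMulVec_apply, mul_comm]
end

section
/- Let n, c, d be positive integers, λ > 0, let k : ℝ → ℝ be differentiable, let M ∈ ℝ^{d×d} be symmetric, and let x₁, …, x_n ∈ ℝ^d, y₁, …, y_n ∈ ℝ^c. Let G ∈ ℝ^{n×n} be the Gram matrix G_{ij} = k(x_i^⊤ M x_j), assume G is symmetric positive semidefinite, let Y ∈ ℝ^{n×c} have rows y_i, and set α := (G + nλ·I)^{−1} Y with rows α_i ∈ ℝ^c. Define f̂(x) = Σ_{j=1}^n k(x^⊤ M x_j) α_j, the loss ℓ(ŷ, y) = (1/2)‖ŷ − y‖², and the FACT matrix F := −(1/(nλ))·Σ_{i=1}^n (∇_x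 [ℓ(f̂(x), y_i)]|_{x = x_i}) x_i^⊤ ∈ ℝ^{d×d}. Then F·M^⊤ = Σ_{i,j=1}^n k'(x_i^⊤ M x_j) · (M x_i) α_i^⊤ α_j (x_j^⊤ M^⊤). -/
open Matrix

section Aux

local notation "⟪" x ", " y "⟫" => @inner ℝ _ _ x y

lemma grad_apply' {d : ℕ} (f : EuclideanSpace ℝ (Fin d) → ℝ) (x : Fin d → ℝ) (l : Fin d) :
    grad f x l
      = fderiv ℝ f ((WithLp.equiv 2 (Fin d → ℝ)).symm x) (EuclideanSpace.single l (1 : ℝ)) := by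
  have h : grad f x l
      = ⟪gradient f ((WithLp.equiv 2 (Fin d → ℝ)).symm x), EuclideanSpace.single l (1 : ℝ)⟫ := by
    rw [EuclideanSpace.inner_single_right]
    simp [grad]
  rw [h, gradient, InnerProductSpace.toDual_symm_apply]

lemma dot_eq_inner' {d : ℕ} (x w : Fin d → ℝ) :
    x ⬝ᵥ w
      = ⟪(WithLp.equiv 2 (Fin d → ℝ)).symm w, (WithLp.equiv 2 (Fin d → ℝ)).symm x⟫ := by
  simp [PiLp.inner_apply, RCLike.inner_apply, dotProduct, mul_comm]

lemma grad_loss {d n c : ℕ} (k : ℝ → ℝ) (hk : Differentiable ℝ k)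
    (w : Fin n → Fin d → ℝ) (α : Matrix (Fin n) (Fin c) ℝ) (yv : Fin c → ℝ)
    (x : Fin d → ℝ) (l : Fin d) :
    grad (fun z => (1 / 2 : ℝ) *
        ∑ kk, ((∑ j, k ((WithLp.equiv 2 (Fin d → ℝ)) z ⬝ᵥ w j) * α j kk) - yv kk) ^ 2) x l
    = ∑ kk, ((∑ j, k (x ⬝ᵥ w j) * α j kk) - yv kk) *
        (∑ j, α j kk * (deriv k (x ⬝ᵥ w j) * w j l)) := by
  classical
  set eqv := WithLp.equiv 2 (Fin d → ℝ)
  set x' : EuclideanSpace ℝ (Fin d) := eqv.symm x with hx'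
  set w' : Fin n → EuclideanSpace ℝ (Fin d) := fun j => eqv.symm (w j) with hw'
  have hipe : ∀ (z : EuclideanSpace ℝ (Fin d)) j, eqv z ⬝ᵥ w j = ⟪w' j, z⟫ := by
    intro z j
    have := dot_eq_inner' (d := d) (eqv z) (w j)
    exact this
  have hxw : ∀ j, ⟪w' j, x'⟫ = x ⬝ᵥ w j := by
    intro j
    rw [← hipe x' j]
    simp [hx']
  -- derivative of each inner kernel term
  have hg : ∀ j, HasFDerivAt (fun z : EuclideanSpace ℝ (Fin d) => k (eqv z ⬝ᵥ w j))
      ((deriv k (x ⬝ᵥ w j)) • (innerSL ℝ (w' j))) x' := by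
    intro j
    have hL : HasFDerivAt (fun z : EuclideanSpace ℝ (Fin d) => ⟪w' j, z⟫)
        (innerSL ℝ (w' j)) x' := (innerSL ℝ (w' j)).hasFDerivAt
    have hkd : HasDerivAt k (deriv k (x ⬝ᵥ w j)) (⟪w' j, x'⟫) := by
      rw [hxw j]; exact (hk (x ⬝ᵥ w j)).hasDerivAt
    have := hkd.comp_hasFDerivAt x' hL
    refine this.congr_of_eventuallyEq ?_
    filter_upwards with z
    simp [Function.comp, hipe z j]
  -- derivative of each residual component
  have h1 : ∀ kk : Fin c, HasFDerivAt
      (fun z : EuclideanSpace ℝ (Fin d) => (∑ j, k (eqv z ⬝ᵥ w j) * α j kk) - yv kk)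
      (∑ j, α j kk • ((deriv k (x ⬝ᵥ w j)) • (innerSL ℝ (w' j)))) x' := by
    intro kk
    exact (HasFDerivAt.fun_sum fun j _ => (hg j).mul_const (α j kk)).sub_const (yv kk)
  -- derivative of each squared residual
  have h2 : ∀ kk : Fin c, HasFDerivAt
      (fun z : EuclideanSpace ℝ (Fin d) =>
        ((∑ j, k (eqv z ⬝ᵥ w j) * α j kk) - yv kk) ^ 2)
      (((2 : ℕ) * ((∑ j, k (x ⬝ᵥ w j) * α j kk) - yv kk) ^ 1) •
        (∑ j, α j kk • ((deriv k (x ⬝ᵥ w j)) • (innerSL ℝ (w' j))))) x' := by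
    intro kk
    have hpt : (∑ j, k (eqv x' ⬝ᵥ w j) * α j kk) - yv kk
        = (∑ j, k (x ⬝ᵥ w j) * α j kk) - yv kk := by
      simp [hx']
    have hpow := hasDerivAt_pow 2 ((∑ j, k (eqv x' ⬝ᵥ w j) * α j kk) - yv kk)
    have := hpow.comp_hasFDerivAt x' (h1 kk)
    rw [hpt] at this
    exact this
  have hf : HasFDerivAt
      (fun z : EuclideanSpace ℝ (Fin d) => (1 / 2 : ℝ) *
        ∑ kk, ((∑ j, k (eqv z ⬝ᵥ w j) * α j kk) - yv kk) ^ 2)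
      ((1 / 2 : ℝ) • ∑ kk, (((2 : ℕ) * ((∑ j, k (x ⬝ᵥ w j) * α j kk) - yv kk) ^ 1) •
        (∑ j, α j kk • ((deriv k (x ⬝ᵥ w j)) • (innerSL ℝ (w' j)))))) x' :=
    (HasFDerivAt.fun_sum fun kk _ => h2 kk).const_mul (1 / 2 : ℝ)
  rw [grad_apply', hf.fderiv]
  have hinner : ∀ j, ⟪w' j, EuclideanSpace.single l (1 : ℝ)⟫ = w j l := by
    intro j
    rw [EuclideanSpace.inner_single_right]
    simp only [_root_.map_one, one_mul, hw']
    rfl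
  simp only [ContinuousLinearMap.smul_apply, ContinuousLinearMap.coe_sum', Finset.sum_apply,
    innerSL_apply_apply, hinner, smul_eq_mul]
  rw [Finset.mul_sum]
  refine Finset.sum_congr rfl fun kk _ => ?_
  rw [Finset.mul_sum, Finset.mul_sum, Finset.mul_sum]
  refine Finset.sum_congr rfl fun j _ => ?_
  push_cast
  ring

lemma sum_swap_key {n c : ℕ} (s : ℝ) (hs : s ≠ 0)
    (a : Matrix (Fin n) (Fin c) ℝ) (dd : Fin n → Fin n → ℝ) (hdd : ∀ i j, dd j i = dd i j)
    (mp mq : Fin n → ℝ) :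
    -(1 / s) * ∑ i, (∑ kk, -(s * a i kk) * ∑ j, a j kk * (dd i j * mp j)) * mq i
      = ∑ i, ∑ j, dd i j * ((∑ kk, a i kk * a j kk) * (mp i * mq j)) := by
  conv_rhs => rw [Finset.sum_comm]
  rw [Finset.mul_sum]
  refine Finset.sum_congr rfl fun i _ => ?_
  simp only [Finset.mul_sum, Finset.sum_mul]
  rw [Finset.sum_comm]
  refine Finset.sum_congr rfl fun j _ => Finset.sum_congr rfl fun kk _ => ?_
  rw [hdd]
  field_simp

end Aux

/-- **FACT matrix of an inner-product-kernel ridge regression predictor.** For the kernel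
`K(x, x') = k(xᵀ M x')` with `M` symmetric, `α = (G + nλ I)⁻¹ Y`, predictor
`f̂(x) = ∑ j k(xᵀ M x_j) α_j` and squared loss `ℓ(ŷ, y) = ½‖ŷ - y‖²`, the FACT matrix
`F = -(1/(nλ)) ∑ i (∇_x ℓ(f̂(x), y_i)|_{x_i}) x_iᵀ` satisfies
`F Mᵀ = ∑_{i,j} k'(x_iᵀ M x_j) (M x_i) α_iᵀ α_j (x_jᵀ Mᵀ)`. -/
theorem fact_inner_product_kernel
    (n c d : ℕ) (hn : 0 < n) (hc : 0 < c) (hd : 0 < d) (lam : ℝ) (hlam : 0 < lam)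
    (k : ℝ → ℝ) (hk : Differentiable ℝ k)
    (M : Matrix (Fin d) (Fin d) ℝ) (hM : M.IsSymm)
    (xs : Fin n → Fin d → ℝ)
    (G : Matrix (Fin n) (Fin n) ℝ)
    (hG : G = Matrix.of fun i j => k (xs i ⬝ᵥ M.mulVec (xs j)))
    (hGpsd : G.PosSemidef)
    (Y : Matrix (Fin n) (Fin c) ℝ)
    (α : Matrix (Fin n) (Fin c) ℝ)
    (hα : α = (G + ((n : ℝ) * lam) • (1 : Matrix (Fin n) (Fin n) ℝ))⁻¹ * Y)
    (fhat : EuclideanSpace ℝ (Fin d) → Fin c → ℝ)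
    (hfhat : ∀ x kk, fhat x kk
      = ∑ j, k ((WithLp.equiv 2 (Fin d → ℝ)) x ⬝ᵥ M.mulVec (xs j)) * α j kk)
    (F : Matrix (Fin d) (Fin d) ℝ)
    (hF : F = (-(1 / ((n : ℝ) * lam))) •
      ∑ i, Matrix.vecMulVec
        (grad (fun x => (1 / 2 : ℝ) * ∑ kk, (fhat x kk - Y i kk) ^ 2) (xs i)) (xs i)) :
    F * Mᵀ = ∑ i, ∑ j,
      deriv k (xs i ⬝ᵥ M.mulVec (xs j)) •
        (∑ kk, α i kk * α j kk) •
          Matrix.vecMulVec (M.mulVec (xs i)) (M.mulVec (xs j)) := by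
  classical
  set s : ℝ := (n : ℝ) * lam with hs
  have hspos : 0 < s := by positivity
  have hsne : s ≠ 0 := hspos.ne'
  -- the regularized Gram matrix is positive definite hence invertible
  set A : Matrix (Fin n) (Fin n) ℝ := G + s • (1 : Matrix (Fin n) (Fin n) ℝ) with hA
  have hApd : A.PosDef := by
    apply Matrix.PosDef.posSemidef_add hGpsd
    rw [Matrix.smul_one_eq_diagonal]
    exact Matrix.posDef_diagonal_iff.mpr fun _ => hspos
  have hAα : A * α = Y := by
    rw [hα, ← Matrix.mul_assoc, Matrix.mul_nonsing_inv A hApd.det_pos.ne'.isUnit, Matrix.one_mul]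
  -- residual identity
  have hres : ∀ i kk, (∑ j, k (xs i ⬝ᵥ M.mulVec (xs j)) * α j kk) - Y i kk
      = -(s * α i kk) := by
    intro i kk
    have h := congrArg (fun B => B i kk) hAα
    simp only [hA, Matrix.mul_apply, Matrix.add_apply, Matrix.smul_apply, Matrix.one_apply,
      smul_eq_mul, mul_ite, mul_one, mul_zero, add_mul, ite_mul, zero_mul,
      Finset.sum_add_distrib, Finset.sum_ite_eq, Finset.mem_univ, if_true] at h
    have hGij : ∀ j, G i j = k (xs i ⬝ᵥ M.mulVec (xs j)) := by
      intro j; rw [hG]; rfl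
    simp only [hGij] at h
    linarith
  -- symmetry of the kernel argument
  have hsymm : ∀ i j, xs j ⬝ᵥ M.mulVec (xs i) = xs i ⬝ᵥ M.mulVec (xs j) := by
    intro i j
    rw [Matrix.dotProduct_mulVec, ← Matrix.mulVec_transpose, hM.eq, dotProduct_comm]
  -- compute the gradient terms
  have hgrad : ∀ i l, grad (fun x => (1 / 2 : ℝ) * ∑ kk, (fhat x kk - Y i kk) ^ 2) (xs i) l
      = ∑ kk, (-(s * α i kk)) *
          (∑ j, α j kk * (deriv k (xs i ⬝ᵥ M.mulVec (xs j)) * M.mulVec (xs j) l)) := by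
    intro i l
    have hfun : (fun x : EuclideanSpace ℝ (Fin d) =>
        (1 / 2 : ℝ) * ∑ kk, (fhat x kk - Y i kk) ^ 2)
        = (fun x : EuclideanSpace ℝ (Fin d) => (1 / 2 : ℝ) *
            ∑ kk, ((∑ j, k ((WithLp.equiv 2 (Fin d → ℝ)) x ⬝ᵥ M.mulVec (xs j)) * α j kk)
              - Y i kk) ^ 2) := by
      funext x
      simp only [hfhat]
    rw [hfun, grad_loss k hk (fun j => M.mulVec (xs j)) α (Y i) (xs i) l]
    exact Finset.sum_congr rfl fun kk _ => by rw [hres i kk]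
  ext p q
  rw [hF]
  simp only [Matrix.mul_apply, Matrix.smul_apply, Matrix.sum_apply, Matrix.vecMulVec_apply,
    Matrix.transpose_apply, smul_eq_mul, hgrad]
  set C : Fin n → ℝ := fun i => ∑ kk, -(s * α i kk) *
      ∑ j, α j kk * (deriv k (xs i ⬝ᵥ M *ᵥ xs j) * (M *ᵥ xs j) p) with hC
  have hmv : ∀ (v : Fin d → ℝ), ∑ r, v r * M q r = (M *ᵥ v) q := by
    intro v
    simp [Matrix.mulVec, dotProduct, mul_comm]
  have lhs_eq : ∑ r, (-(1 / s) * ∑ i, C i * xs i r) * M q r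
      = -(1 / s) * ∑ i, C i * (M *ᵥ xs i) q := by
    simp only [Finset.mul_sum, Finset.sum_mul]
    rw [Finset.sum_comm]
    refine Finset.sum_congr rfl fun i _ => ?_
    rw [← hmv (xs i), Finset.mul_sum, Finset.mul_sum]
    exact Finset.sum_congr rfl fun r _ => by ring
  rw [lhs_eq, hC]
  exact sum_swap_key s hsne α (fun i j => deriv k (xs i ⬝ᵥ M *ᵥ xs j))
    (fun i j => by simp only [hsymm]) (fun i => (M *ᵥ xs i) p) (fun i => (M *ᵥ xs i) q)
end
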